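/- Let n ≥ 2 be a natural number, let f : [0,∞) → ℝ be any function, suppose the set {t ∈ ℕ/n : f(t) ≥ 1} is nonempty with least element τⁿ, and assume τⁿ ≥ 6. Then for t ∈ ℕ/n: f,t ⊭ₙ φ₁ for t = 0, 1/n, …, τⁿ−5−1/n; f,t ⊨ₙ φ₁ for t = τⁿ−5 and t = τⁿ−5+1/n; and f,t ⊭ₙ φ₁ for t = τⁿ−5+2/n, …, τⁿ−2−2/n. -/

import Mathlib

open scoped NNReal ENNReal Topology

/-- The grid `ℕ/n = {k/n : k ∈ ℕ}` inside `[0,∞)`. -/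
def grid (n : ℕ) : Set ℝ≥0 := {t | ∃ k : ℕ, t = (k : ℝ≥0) / (n : ℝ≥0)}

/-- Discrete `◇_I φ` at time `t`: there is `s ∈ I ∩ ℕ/n` with `φ` at `t+s`. -/
def DiaD (n : ℕ) (I : Set ℝ≥0) (φ : ℝ≥0 → Prop) (t : ℝ≥0) : Prop := ∃ s ∈ I ∩ grid n, φ (t + s)

/-- Discrete `□_I φ` at time `t`: for all `s ∈ I ∩ ℕ/n`, `φ` at `t+s`. -/
def BoxD (n : ℕ) (I : Set ℝ≥0) (φ : ℝ≥0 → Prop) (t : ℝ≥0) : Prop := ∀ s ∈ I ∩ grid n, φ (t + s)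

/-- The atomic proposition `p`: `f(t) ≥ 1`. -/
def SatP (f : ℝ≥0 → ℝ) (t : ℝ≥0) : Prop := 1 ≤ f t

/-- Discrete semantics of `φ₁ := □_{(1,2)}(◇_{(1,4)}p ∧ ¬◇_{(1,3)}p)`. -/
def Phi1D (f : ℝ≥0 → ℝ) (n : ℕ) : ℝ≥0 → Prop :=
  BoxD n (Set.Ioo 1 2) fun u =>
    DiaD n (Set.Ioo 1 4) (SatP f) u ∧ ¬ DiaD n (Set.Ioo 1 3) (SatP f) u

/-- Auxiliary: the canonical grid point `a/n`. -/
noncomputable def g (n a : ℕ) : ℝ≥0 := (a : ℝ≥0) / (n : ℝ≥0)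

lemma g_mem (n a : ℕ) : g n a ∈ grid n := ⟨a, rfl⟩

lemma g_add (n a b : ℕ) : g n a + g n b = g n (a + b) := by
  unfold g; push_cast; rw [add_div]

lemma g_le {n : ℕ} (hn : 0 < n) {a b : ℕ} : g n a ≤ g n b ↔ a ≤ b := by
  unfold g
  rw [div_le_div_iff_of_pos_right (by exact_mod_cast hn), Nat.cast_le]

lemma g_lt {n : ℕ} (hn : 0 < n) {a b : ℕ} : g n a < g n b ↔ a < b := by
  unfold g
  rw [div_lt_div_iff_of_pos_right (by exact_mod_cast hn), Nat.cast_lt]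

lemma g_sub (n a b : ℕ) : g n a - g n b = g n (a - b) := by
  unfold g
  rw [← tsub_div, Nat.cast_tsub]

lemma g_cast {n : ℕ} (hn : 0 < n) (c : ℕ) : (c : ℝ≥0) = g n (c * n) := by
  unfold g
  push_cast
  rw [mul_div_assoc, div_self (by exact_mod_cast hn.ne'), mul_one]

lemma g_one (n : ℕ) : g n 1 = 1 / (n : ℝ≥0) := by unfold g; norm_num

lemma g_lit1 {n : ℕ} (hn : 0 < n) : (1 : ℝ≥0) = g n (1 * n) := by
  rw [← g_cast hn 1]; norm_num
lemma g_lit2 {n : ℕ} (hn : 0 < n) : (2 : ℝ≥0) = g n (2 * n) := by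
  rw [← g_cast hn 2]; norm_num
lemma g_lit3 {n : ℕ} (hn : 0 < n) : (3 : ℝ≥0) = g n (3 * n) := by
  rw [← g_cast hn 3]; norm_num
lemma g_lit4 {n : ℕ} (hn : 0 < n) : (4 : ℝ≥0) = g n (4 * n) := by
  rw [← g_cast hn 4]; norm_num
lemma g_lit5 {n : ℕ} (hn : 0 < n) : (5 : ℝ≥0) = g n (5 * n) := by
  rw [← g_cast hn 5]; norm_num
lemma g_lit6 {n : ℕ} (hn : 0 < n) : (6 : ℝ≥0) = g n (6 * n) := by
  rw [← g_cast hn 6]; norm_num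
lemma g_twon (n : ℕ) : (2 : ℝ≥0) / (n : ℝ≥0) = g n 2 := by unfold g; norm_num

/-- Key auxiliary: if `u` is a grid point with `u + 1 < τn < u + 4` and `u + 3 ≤ τn`,
then the inner formula of `φ₁` holds at `u`. -/
lemma holds_aux (n : ℕ) (f : ℝ≥0 → ℝ) (τn : ℝ≥0)
    (hτ : IsLeast {t | t ∈ grid n ∧ 1 ≤ f t} τn)
    (u : ℝ≥0) (hu : u ∈ grid n) (h1 : u + 1 < τn) (h4 : τn < u + 4) (h3 : u + 3 ≤ τn) :
    DiaD n (Set.Ioo 1 4) (SatP f) u ∧ ¬ DiaD n (Set.Ioo 1 3) (SatP f) u := by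
  have hle : u ≤ τn := le_trans (le_add_right le_rfl) h1.le
  constructor
  · refine ⟨τn - u, ⟨⟨?_, ?_⟩, ?_⟩, ?_⟩
    · exact lt_tsub_iff_left.mpr h1
    · exact (tsub_lt_iff_left hle).mpr h4
    · obtain ⟨m, hm⟩ := hτ.1.1
      obtain ⟨a, ha⟩ := hu
      rw [hm, ha]
      exact g_sub n m a ▸ g_mem n (m - a)
    · rw [add_tsub_cancel_of_le hle]
      exact hτ.1.2
  · rintro ⟨s, ⟨⟨hs1, hs3⟩, hsg⟩, hsat⟩
    have hmem : u + s ∈ grid n := by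
      obtain ⟨a, ha⟩ := hu
      obtain ⟨b, hb⟩ := hsg
      rw [ha, hb]; exact g_add n a b ▸ g_mem n (a + b)
    have hge : τn ≤ u + s := hτ.2 ⟨hmem, hsat⟩
    have : u + s < τn := lt_of_lt_of_le ((add_lt_add_iff_left u).mpr hs3) h3
    exact absurd hge (not_le.mpr this)

/-- for `n ≥ 2`, any `f : [0,∞) → ℝ`, if `τⁿ` is the least element of
`{t ∈ ℕ/n : f(t) ≥ 1}` and `τⁿ ≥ 6`, then along the grid: `φ₁` fails at `t = 0,…,τⁿ−5−1/n`
(i.e. `t + 5 + 1/n ≤ τⁿ`), holds at `t = τⁿ−5` and `t = τⁿ−5+1/n`, and fails at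
`t = τⁿ−5+2/n,…,τⁿ−2−2/n` (i.e. `τⁿ−5+2/n ≤ t` and `t + 2 + 2/n ≤ τⁿ`). -/
theorem stmt_7 (n : ℕ) (hn : 2 ≤ n) (f : ℝ≥0 → ℝ) (τn : ℝ≥0)
    (hτ : IsLeast {t | t ∈ grid n ∧ 1 ≤ f t} τn) (h6 : 6 ≤ τn) :
    (∀ t ∈ grid n, t + 5 + 1 / (n : ℝ≥0) ≤ τn → ¬ Phi1D f n t) ∧
      Phi1D f n (τn - 5) ∧ Phi1D f n (τn - 5 + 1 / (n : ℝ≥0)) ∧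
      (∀ t ∈ grid n, τn - 5 + 2 / (n : ℝ≥0) ≤ t → t + 2 + 2 / (n : ℝ≥0) ≤ τn →
        ¬ Phi1D f n t) := by
  have hn0 : 0 < n := by omega
  obtain ⟨m, hm⟩ := hτ.1.1
  rw [show ((m:ℝ≥0)/(n:ℝ≥0)) = g n m from rfl] at hm
  subst hm
  have hm6 : 6 * n ≤ m := by
    rw [g_lit6 hn0, g_le hn0] at h6; omega
  -- minimality in grid terms
  have hmin : ∀ b : ℕ, 1 ≤ f (g n b) → m ≤ b := by
    intro b hb
    have := hτ.2 ⟨g_mem n b, hb⟩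
    exact (g_le hn0).mp this
  refine ⟨?_, ?_, ?_, ?_⟩
  · -- Part 1: failure for t + 5 + 1/n ≤ τn
    rintro t ⟨a, rfl⟩ hle hbox
    rw [show ((a:ℝ≥0)/(n:ℝ≥0)) = g n a from rfl] at *
    rw [g_lit5 hn0, ← g_one, g_add, g_add, g_le hn0] at hle
    have hs : g n (n + 1) ∈ Set.Ioo (1:ℝ≥0) 2 ∩ grid n := by
      refine ⟨⟨?_, ?_⟩, g_mem n _⟩
      · rw [g_lit1 hn0, g_lt hn0]; omega
      · rw [g_lit2 hn0, g_lt hn0]; omega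
    obtain ⟨s, ⟨⟨hs1, hs4⟩, ⟨b, rfl⟩⟩, hsat⟩ := (hbox _ hs).1
    rw [show ((b:ℝ≥0)/(n:ℝ≥0)) = g n b from rfl] at *
    rw [g_lit4 hn0, g_lt hn0] at hs4
    rw [g_add, g_add] at hsat
    have := hmin _ hsat
    omega
  · -- Part 2: holds at τn - 5
    rintro s ⟨⟨hs1, hs2⟩, ⟨k, rfl⟩⟩
    rw [show ((k:ℝ≥0)/(n:ℝ≥0)) = g n k from rfl] at *
    rw [g_lit1 hn0, g_lt hn0] at hs1
    rw [g_lit2 hn0, g_lt hn0] at hs2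
    rw [g_lit5 hn0, g_sub, g_add]
    refine holds_aux n f (g n m) hτ _ (g_mem n _) ?_ ?_ ?_
    · rw [g_lit1 hn0, g_add, g_lt hn0]; omega
    · rw [g_lit4 hn0, g_add, g_lt hn0]; omega
    · rw [g_lit3 hn0, g_add, g_le hn0]; omega
  · -- Part 3: holds at τn - 5 + 1/n
    rintro s ⟨⟨hs1, hs2⟩, ⟨k, rfl⟩⟩
    rw [show ((k:ℝ≥0)/(n:ℝ≥0)) = g n k from rfl] at *
    rw [g_lit1 hn0, g_lt hn0] at hs1
    rw [g_lit2 hn0, g_lt hn0] at hs2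
    rw [g_lit5 hn0, ← g_one, g_sub, g_add, g_add]
    refine holds_aux n f (g n m) hτ _ (g_mem n _) ?_ ?_ ?_
    · rw [g_lit1 hn0, g_add, g_lt hn0]; omega
    · rw [g_lit4 hn0, g_add, g_lt hn0]; omega
    · rw [g_lit3 hn0, g_add, g_le hn0]; omega
  · -- Part 4: failure for τn - 5 + 2/n ≤ t, t + 2 + 2/n ≤ τn
    rintro t ⟨a, rfl⟩ hge hle hbox
    rw [show ((a:ℝ≥0)/(n:ℝ≥0)) = g n a from rfl] at *
    rw [g_lit5 hn0, g_twon, g_sub, g_add, g_le hn0] at hge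
    rw [g_twon, g_lit2 hn0, g_add, g_add, g_le hn0] at hle
    set k : ℕ := max (n + 1) (m - a - 3 * n + 1) with hk
    have hs : g n k ∈ Set.Ioo (1:ℝ≥0) 2 ∩ grid n := by
      refine ⟨⟨?_, ?_⟩, g_mem n _⟩
      · rw [g_lit1 hn0, g_lt hn0]; omega
      · rw [g_lit2 hn0, g_lt hn0]; omega
    refine (hbox _ hs).2 ⟨g n (m - a - k), ⟨⟨?_, ?_⟩, g_mem n _⟩, ?_⟩
    · rw [g_lit1 hn0, g_lt hn0]; omega
    · rw [g_lit3 hn0, g_lt hn0]; omega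
    · rw [g_add, g_add, show a + k + (m - a - k) = m by omega]
      exact hτ.1.2
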